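/- Let (X, r) be a quadratic set with r ∘ r = r, writing r(x,y) = (ˣy, xʸ), and let S = S(X,r) be the associated monoid. (1) If r is left nondegenerate (each map y ↦ ˣy is bijective), then S has left cancellation on monomials of length 2: for all x,y,z ∈ X, if [x][y] = [x][z] in S then y = z. (2) If r is right nondegenerate (each map x ↦ xʸ is bijective), then for all x,y,z ∈ X, if [y][x] = [z][x] in S then y = z. -/

import Mathlib

/-- Auxiliary monoid for the invariant. -/
inductive QM (X : Type*) where
  | one : QM X
  | gen : X → QM X
  | pair : X × X → QM X
  | inf : QM X

namespace QM

variable {X : Type*}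

def qmul (r : X × X → X × X) : QM X → QM X → QM X
  | .one, m => m
  | .gen x, .one => .gen x
  | .pair p, .one => .pair p
  | .inf, .one => .inf
  | .gen x, .gen y => .pair (r (x, y))
  | _, _ => .inf

def qmonoid (r : X × X → X × X) : Monoid (QM X) where
  mul := qmul r
  one := .one
  one_mul a := by cases a <;> rfl
  mul_one a := by cases a <;> rfl
  mul_assoc a b c := by cases a <;> cases b <;> cases c <;> rfl

end QM

/-- The congruence on the free monoid generated by the defining relations
`x y = ˣy ⬝ xʸ` of the monoid `S(X, r)` associated to a quadratic set `(X, r)`. -/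
def qsCon {X : Type*} (r : X × X → X × X) : Con (FreeMonoid X) :=
  conGen fun a b =>
    ∃ x y : X, a = FreeMonoid.of x * FreeMonoid.of y ∧
      b = FreeMonoid.of (r (x, y)).1 * FreeMonoid.of (r (x, y)).2

theorem qs_key {X : Type*} (r : X × X → X × X) (hidem : r ∘ r = r)
    {x y x' y' : X}
    (h : (qsCon r).mk' (FreeMonoid.of x * FreeMonoid.of y) =
      (qsCon r).mk' (FreeMonoid.of x' * FreeMonoid.of y')) :
    r (x, y) = r (x', y') := by
  letI : Monoid (QM X) := QM.qmonoid r
  let f : FreeMonoid X →* QM X := FreeMonoid.lift QM.gen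
  have hf : ∀ a b : X, f (FreeMonoid.of a * FreeMonoid.of b) = QM.pair (r (a, b)) := by
    intro a b
    simp only [map_mul, f, FreeMonoid.lift_eval_of]
    rfl
  have hle : qsCon r ≤ Con.ker f := by
    apply Con.conGen_le.mpr
    rintro a b ⟨u, v, rfl, rfl⟩
    show f _ = f _
    rw [hf, hf]
    have : r (r (u, v)) = r (u, v) := congrFun hidem (u, v)
    rw [show ((r (u, v)).1, (r (u, v)).2) = r (u, v) from rfl, this]
  have h' : (qsCon r) (FreeMonoid.of x * FreeMonoid.of y) (FreeMonoid.of x' * FreeMonoid.of y') :=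
    (Con.eq _).mp (by simpa using h)
  have := hle h'
  have hfe : f (FreeMonoid.of x * FreeMonoid.of y) = f (FreeMonoid.of x' * FreeMonoid.of y') := this
  rw [hf, hf] at hfe
  exact QM.pair.inj hfe

/-- if `(X,r)` is an idempotent quadratic set, then left (resp. right)
nondegeneracy implies left (resp. right) cancellation in `S(X,r)` on monomials of
length 2. -/
theorem stmt_5 {X : Type*} (r : X × X → X × X) (hidem : r ∘ r = r) :
    ((∀ x : X, Function.Bijective fun y : X => (r (x, y)).1) →
      ∀ x y z : X,
        (qsCon r).mk' (FreeMonoid.of x * FreeMonoid.of y) =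
          (qsCon r).mk' (FreeMonoid.of x * FreeMonoid.of z) → y = z) ∧
    ((∀ y : X, Function.Bijective fun x : X => (r (x, y)).2) →
      ∀ x y z : X,
        (qsCon r).mk' (FreeMonoid.of y * FreeMonoid.of x) =
          (qsCon r).mk' (FreeMonoid.of z * FreeMonoid.of x) → y = z) := by
  constructor
  · intro hnd x y z h
    have := qs_key r hidem h
    exact (hnd x).injective (by simpa using congrArg Prod.fst this)
  · intro hnd x y z h
    have := qs_key r hidem h
    exact (hnd x).injective (by simpa using congrArg Prod.snd this)
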